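/- Let n ≥ 5 and let p(s) = s^n + α1·s^{n-1} + α2·s^{n-2} + α3·s^{n-3} + s^{n-4} + α5·s^{n-5} + ... + αn be a monic real polynomial whose coefficient of s^{n-4} equals 1, with the convention αk = 0 for k > n. If 0 < α2 ≤ 2 and α7 - α1·α6 ≥ 0, then p is Hurwitz unstable, i.e., p has a complex root with nonnegative real part. -/

import Mathlib

open Polynomial

noncomputable def Acoef (p : ℝ[X]) (k : ℕ) : ℝ :=
  if k ≤ p.natDegree then p.coeff (p.natDegree - k) else 0

lemma Acoef_zero (p : ℝ[X]) (hm : p.Monic) : Acoef p 0 = 1 := by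
  simp [Acoef, hm.coeff_natDegree]

lemma Acoef_of_gt (p : ℝ[X]) {k : ℕ} (hk : p.natDegree < k) : Acoef p k = 0 := by
  simp [Acoef, Nat.not_le.mpr hk]

lemma Acoef_of_le (p : ℝ[X]) {k : ℕ} (hk : k ≤ p.natDegree) :
    Acoef p k = p.coeff (p.natDegree - k) := by simp [Acoef, hk]

lemma natDegree_linear_mul (a : ℝ) (q : ℝ[X]) (hq : q.Monic) :
    ((X + C a) * q).natDegree = q.natDegree + 1 := by
  rw [natDegree_mul (X_add_C_ne_zero a) hq.ne_zero, natDegree_X_add_C]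
  omega

lemma monic_quad (b c : ℝ) : (X ^ 2 + C b * X + C c : ℝ[X]).Monic := by
  have h1 : (X ^ 2 : ℝ[X]).Monic := monic_X_pow 2
  have : ((X:ℝ[X]) ^ 2 + (C b * X + C c)).Monic := by
    apply h1.add_of_left
    rw [degree_X_pow]
    apply lt_of_le_of_lt (degree_linear_le)
    norm_num
  simpa [add_assoc] using this

lemma natDegree_quad (b c : ℝ) : (X ^ 2 + C b * X + C c : ℝ[X]).natDegree = 2 := by
  have h := monic_quad b c
  have hlt : (C b * X + C c).degree < ((X:ℝ[X]) ^ 2).degree := by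
    rw [degree_X_pow]
    exact lt_of_le_of_lt degree_linear_le (by norm_num)
  have : ((X:ℝ[X]) ^ 2 + (C b * X + C c)).degree = 2 := by
    rw [degree_add_eq_left_of_degree_lt hlt, degree_X_pow]; rfl
  have h2 : ((X:ℝ[X]) ^ 2 + C b * X + C c).degree = 2 := by rwa [add_assoc]
  exact natDegree_eq_of_degree_eq_some h2

lemma natDegree_quad_mul (b c : ℝ) (q : ℝ[X]) (hq : q.Monic) :
    ((X ^ 2 + C b * X + C c) * q).natDegree = q.natDegree + 2 := by
  rw [natDegree_mul (monic_quad b c).ne_zero hq.ne_zero, natDegree_quad]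
  omega

lemma coeff_linear_mul (a : ℝ) (q : ℝ[X]) (j : ℕ) :
    ((X + C a) * q).coeff (j + 1) = q.coeff j + a * q.coeff (j + 1) := by
  rw [add_mul, coeff_add, coeff_X_mul, coeff_C_mul]

lemma coeff_linear_mul_zero (a : ℝ) (q : ℝ[X]) :
    ((X + C a) * q).coeff 0 = a * q.coeff 0 := by
  rw [add_mul, coeff_add, mul_coeff_zero, coeff_X_zero, coeff_C_mul, zero_mul, zero_add]

lemma Acoef_linear_mul (a : ℝ) (q : ℝ[X]) (hq : q.Monic) (k : ℕ) (hk : 1 ≤ k) :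
    Acoef ((X + C a) * q) k = Acoef q k + a * Acoef q (k - 1) := by
  have hd := natDegree_linear_mul a q hq
  set m := q.natDegree with hm
  rcases le_or_gt k (m + 1) with h | h
  · rcases eq_or_lt_of_le h with rfl | h'
    · rw [Acoef_of_le _ (by omega : m + 1 ≤ ((X + C a) * q).natDegree), hd]
      have : m + 1 - (m + 1) = 0 := by omega
      rw [this, coeff_linear_mul_zero]
      rw [Acoef_of_gt q (by omega), Acoef_of_le q (by omega : m + 1 - 1 ≤ m)]
      have : m - (m + 1 - 1) = 0 := by omega
      rw [this]; ring
    · -- k ≤ m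
      have hkm : k ≤ m := by omega
      rw [Acoef_of_le _ (by omega : k ≤ ((X + C a) * q).natDegree), hd]
      have he : m + 1 - k = (m - k) + 1 := by omega
      rw [he, coeff_linear_mul]
      rw [Acoef_of_le q hkm, Acoef_of_le q (by omega : k - 1 ≤ m)]
      have : m - k + 1 = m - (k - 1) := by omega
      rw [this]
  · rw [Acoef_of_gt _ (by omega : ((X + C a) * q).natDegree < k),
      Acoef_of_gt q (by omega), Acoef_of_gt q (by omega)]
    ring

lemma coeff_quad_mul (b c : ℝ) (q : ℝ[X]) (j : ℕ) :
    ((X ^ 2 + C b * X + C c) * q).coeff (j + 2) =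
      q.coeff j + b * q.coeff (j + 1) + c * q.coeff (j + 2) := by
  rw [add_mul, add_mul, coeff_add, coeff_add, coeff_C_mul, mul_assoc,
    coeff_C_mul, coeff_X_mul]
  congr 2
  rw [coeff_X_pow_mul]

lemma coeff_quad_mul_one (b c : ℝ) (q : ℝ[X]) :
    ((X ^ 2 + C b * X + C c) * q).coeff 1 = b * q.coeff 0 + c * q.coeff 1 := by
  rw [add_mul, add_mul, coeff_add, coeff_add, coeff_C_mul, mul_assoc,
    coeff_C_mul]
  have h1 : ((X:ℝ[X]) ^ 2 * q).coeff 1 = 0 := by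
    rw [pow_two, mul_assoc, coeff_X_mul, mul_coeff_zero, coeff_X_zero, zero_mul]
  have h2 : ((X:ℝ[X]) * q).coeff 0 = 0 := by
    rw [mul_coeff_zero, coeff_X_zero, zero_mul]
  rw [h1, coeff_X_mul, zero_add]

lemma coeff_quad_mul_zero (b c : ℝ) (q : ℝ[X]) :
    ((X ^ 2 + C b * X + C c) * q).coeff 0 = c * q.coeff 0 := by
  rw [add_mul, add_mul, coeff_add, coeff_add, mul_coeff_zero, mul_coeff_zero,
    coeff_C_mul]
  simp

lemma Acoef_quad_mul (b c : ℝ) (q : ℝ[X]) (hq : q.Monic) (k : ℕ) (hk : 2 ≤ k) :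
    Acoef ((X ^ 2 + C b * X + C c) * q) k
      = Acoef q k + b * Acoef q (k - 1) + c * Acoef q (k - 2) := by
  have hd := natDegree_quad_mul b c q hq
  set m := q.natDegree with hm
  rcases le_or_gt k (m + 2) with h | h
  · rw [Acoef_of_le _ (by omega : k ≤ ((X ^ 2 + C b * X + C c) * q).natDegree), hd]
    rcases eq_or_lt_of_le h with rfl | h'
    · have : m + 2 - (m + 2) = 0 := by omega
      rw [this, coeff_quad_mul_zero]
      rw [Acoef_of_gt q (by omega), Acoef_of_gt q (by omega),
        Acoef_of_le q (by omega : m + 2 - 2 ≤ m)]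
      have : m - (m + 2 - 2) = 0 := by omega
      rw [this]; ring
    · rcases eq_or_lt_of_le (by omega : k ≤ m + 1) with rfl | h''
      · have hm1 : 1 ≤ m := by omega
        have : m + 2 - (m + 1) = 1 := by omega
        rw [this, coeff_quad_mul_one]
        rw [Acoef_of_gt q (by omega), Acoef_of_le q (by omega : m + 1 - 1 ≤ m),
          Acoef_of_le q (by omega : m + 1 - 2 ≤ m)]
        have e1 : m - (m + 1 - 1) = 0 := by omega
        have e2 : m - (m + 1 - 2) = 1 := by omega
        rw [e1, e2]; ring
      · have hkm : k ≤ m := by omega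
        have he : m + 2 - k = (m - k) + 2 := by omega
        rw [he, coeff_quad_mul]
        rw [Acoef_of_le q hkm, Acoef_of_le q (by omega : k - 1 ≤ m),
          Acoef_of_le q (by omega : k - 2 ≤ m)]
        have e1 : m - k + 1 = m - (k - 1) := by omega
        have e2 : m - k + 2 = m - (k - 2) := by omega
        rw [e1, e2]
  · rw [Acoef_of_gt _ (by omega : ((X ^ 2 + C b * X + C c) * q).natDegree < k),
      Acoef_of_gt q (by omega), Acoef_of_gt q (by omega), Acoef_of_gt q (by omega)]
    ring

lemma Acoef_linear_mul_one (a : ℝ) (q : ℝ[X]) (hq : q.Monic) :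
    Acoef ((X + C a) * q) 1 = Acoef q 1 + a := by
  rw [Acoef_linear_mul a q hq 1 le_rfl]
  simp [Acoef_zero q hq]

lemma Acoef_quad_mul_one (b c : ℝ) (q : ℝ[X]) (hq : q.Monic) :
    Acoef ((X ^ 2 + C b * X + C c) * q) 1 = Acoef q 1 + b := by
  have hd := natDegree_quad_mul b c q hq
  set m := q.natDegree with hm
  rw [Acoef_of_le _ (by omega : 1 ≤ ((X ^ 2 + C b * X + C c) * q).natDegree), hd]
  rcases Nat.eq_zero_or_pos m with hm0 | hm1
  · rw [hm0]
    have : 0 + 2 - 1 = 1 := rfl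
    rw [this, coeff_quad_mul_one]
    have h0 : q.coeff 0 = 1 := by
      have := hq.coeff_natDegree
      rwa [← hm, hm0] at this
    have h1 : q.coeff 1 = 0 := coeff_eq_zero_of_natDegree_lt (by omega)
    rw [Acoef_of_gt q (by omega), h0, h1]; ring
  · have he : m + 2 - 1 = (m - 1) + 2 := by omega
    rw [he, coeff_quad_mul]
    have e1 : m - 1 + 1 = m := by omega
    have e2 : q.coeff (m - 1 + 2) = 0 := coeff_eq_zero_of_natDegree_lt (by omega)
    rw [e1, e2, hq.coeff_natDegree, Acoef_of_le q (by omega : 1 ≤ m)]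
    ring

structure Phi (p : ℝ[X]) : Prop where
  mon : p.Monic
  nn : ∀ k, 0 ≤ Acoef p k
  pos : ∀ k, 1 ≤ k → k ≤ p.natDegree → 0 < Acoef p k
  J : ∀ k, Acoef p (2 * k + 1) ≤ Acoef p 1 * Acoef p (2 * k)
  J3 : 7 ≤ p.natDegree → Acoef p 7 < Acoef p 1 * Acoef p 6
  C3 : p.natDegree = 3 → Acoef p 3 < Acoef p 1 * Acoef p 2
  C4 : p.natDegree = 4 →
    Acoef p 3 ^ 2 + Acoef p 1 ^ 2 * Acoef p 4 < Acoef p 1 * Acoef p 2 * Acoef p 3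
  C5 : p.natDegree = 5 → 4 * Acoef p 4 < Acoef p 2 ^ 2

lemma Phi_one : Phi (1 : ℝ[X]) := by
  have hA : ∀ k, 1 ≤ k → Acoef (1 : ℝ[X]) k = 0 := fun k hk =>
    Acoef_of_gt 1 (by simp [natDegree_one]; omega)
  refine ⟨monic_one, ?_, ?_, ?_, ?_, ?_, ?_, ?_⟩
  · intro k
    rcases Nat.eq_zero_or_pos k with rfl | hk
    · rw [Acoef_zero _ monic_one]; norm_num
    · rw [hA k hk]
  · intro k hk hk'; rw [natDegree_one] at hk'; omega
  · intro k
    rw [hA (2 * k + 1) (by omega)]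
    have h1 : Acoef (1 : ℝ[X]) 1 = 0 := hA 1 le_rfl
    rw [h1]
    rcases Nat.eq_zero_or_pos k with rfl | hk
    · rw [Acoef_zero _ monic_one]; norm_num
    · rw [hA (2 * k) (by omega)]; norm_num
  · intro h; rw [natDegree_one] at h; omega
  · intro h; rw [natDegree_one] at h; omega
  · intro h; rw [natDegree_one] at h; omega
  · intro h; rw [natDegree_one] at h; omega

lemma Phi_linear {a : ℝ} (ha : 0 < a) {q : ℝ[X]} (hq : Phi q) :
    Phi ((X + C a) * q) := by
  have hqm := hq.mon
  have hmon : ((X + C a) * q).Monic := (monic_X_add_C a).mul hqm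
  have hd := natDegree_linear_mul a q hqm
  have hq0 : Acoef q 0 = 1 := Acoef_zero q hqm
  have hrec : ∀ k, 1 ≤ k → Acoef ((X + C a) * q) k = Acoef q k + a * Acoef q (k - 1) :=
    fun k hk => Acoef_linear_mul a q hqm k hk
  have hp1 : Acoef ((X + C a) * q) 1 = Acoef q 1 + a := Acoef_linear_mul_one a q hqm
  refine ⟨hmon, ?_, ?_, ?_, ?_, ?_, ?_, ?_⟩
  · intro k
    rcases Nat.eq_zero_or_pos k with rfl | hk
    · rw [Acoef_zero _ hmon]; norm_num
    · rw [hrec k hk]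
      have := hq.nn k; have := hq.nn (k - 1)
      nlinarith
  · intro k hk hk'
    rw [hd] at hk'
    rw [hrec k hk]
    have h1 : 0 < Acoef q (k - 1) := by
      rcases Nat.eq_zero_or_pos (k - 1) with h0 | hpos
      · rw [h0, hq0]; norm_num
      · exact hq.pos (k - 1) hpos (by omega)
    have := hq.nn k
    nlinarith
  · intro k
    rcases Nat.eq_zero_or_pos k with rfl | hk
    · have h0 : Acoef ((X + C a) * q) 0 = 1 := Acoef_zero _ hmon
      simp [h0]
    · have e1 : 2 * k + 1 - 1 = 2 * k := by omega
      have e2 : 2 * k - 1 = 2 * (k - 1) + 1 := by omega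
      rw [hrec (2 * k + 1) (by omega), hrec (2 * k) (by omega), hp1, e1, e2]
      have hJ := hq.J k
      have hnn := hq.nn (2 * (k - 1) + 1)
      have hnn2 := hq.nn (2 * k)
      have hnn1 := hq.nn 1
      nlinarith [mul_nonneg (mul_nonneg ha.le hnn1) hnn,
        mul_nonneg (mul_nonneg ha.le ha.le) hnn]
  · intro h7
    rw [hd] at h7
    have e7 : (7 : ℕ) - 1 = 6 := rfl
    have e6 : (6 : ℕ) - 1 = 5 := rfl
    rw [hrec 7 (by omega), hrec 6 (by omega), hp1, e7, e6]
    have hJ := hq.J 3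
    norm_num at hJ
    have h5 : 0 < Acoef q 5 := hq.pos 5 (by omega) (by omega)
    have hnn1 := hq.nn 1
    have hnn6 := hq.nn 6
    nlinarith [mul_nonneg (mul_nonneg ha.le hnn1) h5.le,
      mul_pos (mul_pos ha ha) h5]
  · intro h3
    rw [hd] at h3
    have h3' : q.natDegree = 2 := by omega
    rw [hrec 3 (by omega), hrec 2 (by omega), hp1]
    norm_num
    have hA3 : Acoef q 3 = 0 := Acoef_of_gt q (by omega)
    have h1 : 0 < Acoef q 1 := hq.pos 1 (by omega) (by omega)
    have h2 : 0 < Acoef q 2 := hq.pos 2 (by omega) (by omega)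
    rw [hA3]
    nlinarith [mul_pos h1 h2, mul_pos (mul_pos ha ha) h1, mul_pos ha (mul_pos h1 h1)]
  · intro h4
    rw [hd] at h4
    have h3' : q.natDegree = 3 := by omega
    rw [hrec 4 (by omega), hrec 3 (by omega), hrec 2 (by omega), hp1]
    norm_num
    have hA4 : Acoef q 4 = 0 := Acoef_of_gt q (by omega)
    have h1 : 0 < Acoef q 1 := hq.pos 1 (by omega) (by omega)
    have h2 : 0 < Acoef q 2 := hq.pos 2 (by omega) (by omega)
    have h3 : 0 < Acoef q 3 := hq.pos 3 (by omega) (by omega)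
    have hC3 := hq.C3 h3'
    rw [hA4]
    set q1 := Acoef q 1
    set q2 := Acoef q 2
    set q3 := Acoef q 3
    have key : (q1 + a) * (q2 + a * q1) * (q3 + a * q2) - (q3 + a * q2) ^ 2
        - (q1 + a) ^ 2 * ((0:ℝ) + a * q3)
        = (q1 * q2 - q3) * (q3 + a * q2 + a ^ 2 * q1 + a ^ 3) := by ring
    nlinarith [mul_pos (sub_pos.mpr hC3) (by positivity : (0:ℝ) < q3 + a * q2 + a ^ 2 * q1 + a ^ 3)]
  · intro h5
    rw [hd] at h5
    have h4' : q.natDegree = 4 := by omega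
    rw [hrec 4 (by omega), hrec 2 (by omega)]
    norm_num
    have h1 : 0 < Acoef q 1 := hq.pos 1 (by omega) (by omega)
    have hC4 := hq.C4 h4'
    set q1 := Acoef q 1
    set q2 := Acoef q 2
    set q3 := Acoef q 3
    set q4 := Acoef q 4
    have key : q1 ^ 2 * ((q2 + a * q1) ^ 2 - 4 * (q4 + a * q3))
        = (q1 * q2 - 2 * q3 + a * q1 ^ 2) ^ 2
          + 4 * (q1 * q2 * q3 - q3 ^ 2 - q1 ^ 2 * q4) := by ring
    nlinarith [sq_nonneg (q1 * q2 - 2 * q3 + a * q1 ^ 2), mul_pos h1 h1]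

lemma Phi_quad {b c : ℝ} (hb : 0 < b) (hc : 0 < c) {q : ℝ[X]} (hq : Phi q) :
    Phi ((X ^ 2 + C b * X + C c) * q) := by
  have hqm := hq.mon
  have hmon : ((X ^ 2 + C b * X + C c) * q).Monic := (monic_quad b c).mul hqm
  have hd := natDegree_quad_mul b c q hqm
  have hq0 : Acoef q 0 = 1 := Acoef_zero q hqm
  have hrec : ∀ k, 2 ≤ k → Acoef ((X ^ 2 + C b * X + C c) * q) k
      = Acoef q k + b * Acoef q (k - 1) + c * Acoef q (k - 2) :=
    fun k hk => Acoef_quad_mul b c q hqm k hk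
  have hp1 : Acoef ((X ^ 2 + C b * X + C c) * q) 1 = Acoef q 1 + b :=
    Acoef_quad_mul_one b c q hqm
  have hposq : ∀ k, k ≤ q.natDegree → 0 < Acoef q k := by
    intro k hk
    rcases Nat.eq_zero_or_pos k with rfl | hpos
    · rw [hq0]; norm_num
    · exact hq.pos k hpos hk
  refine ⟨hmon, ?_, ?_, ?_, ?_, ?_, ?_, ?_⟩
  · intro k
    rcases Nat.eq_zero_or_pos k with rfl | hk
    · rw [Acoef_zero _ hmon]; norm_num
    · rcases eq_or_lt_of_le (show 1 ≤ k from hk) with h1 | h2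
      · rw [← h1, hp1]
        have := hq.nn 1
        nlinarith
      · rw [hrec k h2]
        have := hq.nn k; have := hq.nn (k - 1); have := hq.nn (k - 2)
        nlinarith
  · intro k hk hk'
    rw [hd] at hk'
    rcases eq_or_lt_of_le hk with h1 | h2
    · rw [← h1, hp1]
      have := hq.nn 1
      nlinarith
    · rw [hrec k h2]
      have h1 : 0 < Acoef q (k - 2) := hposq (k - 2) (by omega)
      have := hq.nn k; have := hq.nn (k - 1)
      nlinarith
  · intro k
    rcases Nat.eq_zero_or_pos k with rfl | hk
    · have h0 : Acoef ((X ^ 2 + C b * X + C c) * q) 0 = 1 := Acoef_zero _ hmon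
      simp [h0]
    · have e1 : 2 * k + 1 - 1 = 2 * k := by omega
      have e2 : 2 * k + 1 - 2 = 2 * (k - 1) + 1 := by omega
      have e3 : 2 * k - 1 = 2 * (k - 1) + 1 := by omega
      have e4 : 2 * k - 2 = 2 * (k - 1) := by omega
      rw [hrec (2 * k + 1) (by omega), hrec (2 * k) (by omega), hp1, e1, e2, e3, e4]
      have hJk := hq.J k
      have hJk1 := hq.J (k - 1)
      have hnn := hq.nn (2 * (k - 1) + 1)
      have hnn2 := hq.nn (2 * k)
      have hnn0 := hq.nn (2 * (k - 1))
      have hnn1 := hq.nn 1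
      nlinarith [mul_nonneg (mul_nonneg hb.le hnn1) hnn,
        mul_nonneg (mul_nonneg hb.le hb.le) hnn,
        mul_nonneg (mul_nonneg hc.le hb.le) hnn0,
        mul_nonneg hc.le (sub_nonneg.mpr hJk1)]
  · intro h7
    rw [hd] at h7
    rw [hrec 7 (by omega), hrec 6 (by omega), hp1]
    norm_num
    have hJ3 := hq.J 3
    have hJ2 := hq.J 2
    norm_num at hJ3 hJ2
    have h5 : 0 < Acoef q 5 := hq.pos 5 (by omega) (by omega)
    have h4 : 0 < Acoef q 4 := hq.pos 4 (by omega) (by omega)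
    have hnn1 := hq.nn 1
    have hnn6 := hq.nn 6
    nlinarith [mul_nonneg (mul_nonneg hb.le hnn1) h5.le,
      mul_pos (mul_pos hb hb) h5,
      mul_pos (mul_pos hc hb) h4,
      mul_nonneg hc.le (sub_nonneg.mpr hJ2)]
  · intro h3
    rw [hd] at h3
    have h1' : q.natDegree = 1 := by omega
    rw [hrec 3 (by omega), hrec 2 (by omega), hp1]
    norm_num
    have hA2 : Acoef q 2 = 0 := Acoef_of_gt q (by omega)
    have hA3 : Acoef q 3 = 0 := Acoef_of_gt q (by omega)
    have h1 : 0 < Acoef q 1 := hq.pos 1 (by omega) (by omega)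
    rw [hA2, hA3, hq0]
    nlinarith [mul_pos hb (mul_pos h1 h1), mul_pos (mul_pos hb hb) h1, mul_pos hb hc]
  · intro h4
    rw [hd] at h4
    have h2' : q.natDegree = 2 := by omega
    rw [hrec 4 (by omega), hrec 3 (by omega), hrec 2 (by omega), hp1]
    norm_num
    have hA3 : Acoef q 3 = 0 := Acoef_of_gt q (by omega)
    have hA4 : Acoef q 4 = 0 := Acoef_of_gt q (by omega)
    have h1 : 0 < Acoef q 1 := hq.pos 1 (by omega) (by omega)
    have h2 : 0 < Acoef q 2 := hq.pos 2 (by omega) (by omega)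
    rw [hA3, hA4, hq0]
    set d := Acoef q 1
    set e := Acoef q 2
    have key : (d + b) * (e + b * d + c) * (b * e + c * d) - (b * e + c * d) ^ 2
        - (d + b) ^ 2 * (c * e)
        = b * d * ((c - e) ^ 2 + (b + d) * (b * e + c * d)) := by ring
    nlinarith [mul_pos (mul_pos hb h1)
      (by nlinarith [sq_nonneg (c - e),
        mul_pos (add_pos hb h1) (add_pos (mul_pos hb h2) (mul_pos hc h1))] :
        (0:ℝ) < (c - e) ^ 2 + (b + d) * (b * e + c * d))]
  · intro h5
    rw [hd] at h5
    have h3' : q.natDegree = 3 := by omega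
    rw [hrec 4 (by omega), hrec 2 (by omega)]
    norm_num
    have hA4 : Acoef q 4 = 0 := Acoef_of_gt q (by omega)
    have hC3 := hq.C3 h3'
    have h1 : 0 < Acoef q 1 := hq.pos 1 (by omega) (by omega)
    rw [hA4, hq0]
    set q1 := Acoef q 1
    set q2 := Acoef q 2
    set q3 := Acoef q 3
    have key : (q2 + b * q1 + c * 1) ^ 2 - 4 * ((0:ℝ) + b * q3 + c * q2)
        = (c - q2 + b * q1) ^ 2 + 4 * b * (q1 * q2 - q3) := by ring
    nlinarith [sq_nonneg (c - q2 + b * q1), mul_pos hb (sub_pos.mpr hC3)]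

lemma hurwitz_phi : ∀ (N : ℕ) (p : ℝ[X]), p.natDegree ≤ N → p.Monic →
    (∀ z : ℂ, aeval z p = 0 → z.re < 0) → Phi p := by
  intro N
  induction N with
  | zero =>
    intro p hd hm _
    have : p = 1 := hm.natDegree_eq_zero.mp (by omega)
    rw [this]; exact Phi_one
  | succ N ih =>
    intro p hd hm hroot
    rcases Nat.eq_zero_or_pos p.natDegree with h0 | hpos
    · have : p = 1 := hm.natDegree_eq_zero.mp h0
      rw [this]; exact Phi_one
    · -- get a complex root
      have hmapdeg : (p.map (algebraMap ℝ ℂ)).degree = p.degree :=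
        degree_map_eq_of_injective (algebraMap ℝ ℂ).injective p
      have hdegpos : 0 < (p.map (algebraMap ℝ ℂ)).degree := by
        rw [hmapdeg]
        exact natDegree_pos_iff_degree_pos.mp hpos
      obtain ⟨z, hz⟩ := Complex.exists_root hdegpos
      have hz' : aeval z p = 0 := by
        rwa [aeval_def, ← eval_map]
      have hre : z.re < 0 := hroot z hz'
      by_cases him : z.im = 0
      · -- real root
        have hzr : z = ((z.re : ℝ) : ℂ) := by
          apply Complex.ext <;> simp [him]
        have hev : p.eval z.re = 0 := by
          have h1 : aeval ((z.re : ℝ) : ℂ) p = 0 := by rw [← hzr]; exact hz'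
          have h2 : aeval (algebraMap ℝ ℂ z.re) p = algebraMap ℝ ℂ (p.eval z.re) :=
            aeval_algebraMap_apply_eq_algebraMap_eval z.re p
          rw [show ((z.re : ℝ) : ℂ) = algebraMap ℝ ℂ z.re from rfl] at h1
          rw [h1] at h2
          have h3 : ((p.eval z.re : ℝ) : ℂ) = 0 := by rw [← Complex.coe_algebraMap, ← h2]
          exact_mod_cast h3
        obtain ⟨q, hqf⟩ := (dvd_iff_isRoot.mpr hev)
        set a : ℝ := -z.re with hadef
        have hfac : p = (X + C a) * q := by
          rw [hqf]; congr 1; rw [hadef, map_neg, sub_eq_add_neg]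
        have hqm : q.Monic := (monic_X_add_C a).of_mul_monic_left (hfac ▸ hm)
        have hdq : q.natDegree ≤ N := by
          have := natDegree_linear_mul a q hqm
          rw [← hfac] at this
          omega
        have hqroot : ∀ w : ℂ, aeval w q = 0 → w.re < 0 := by
          intro w hw
          apply hroot
          rw [hfac, map_mul, hw, mul_zero]
        rw [hfac]
        exact Phi_linear (by linarith) (ih q hdq hqm hqroot)
      · -- complex root, peel quadratic
        set b : ℝ := -(2 * z.re) with hbdef
        set c : ℝ := z.re ^ 2 + z.im ^ 2 with hcdef
        set K : ℝ[X] := X ^ 2 + C b * X + C c with hKdef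
        have hKm : K.Monic := monic_quad b c
        have hKz : aeval z K = 0 := by
          rw [hKdef]
          simp only [map_add, map_mul, map_pow, aeval_X, aeval_C]
          rw [Complex.ext_iff]
          simp [Complex.mul_re, Complex.mul_im, pow_two, hbdef, hcdef,
            Complex.ofReal_re, Complex.ofReal_im]
          constructor <;> ring
        have hKzbar : aeval (starRingEnd ℂ z) K = 0 := by
          rw [Polynomial.aeval_conj, hKz, map_zero]
        have hpzbar : aeval (starRingEnd ℂ z) p = 0 := by
          rw [Polynomial.aeval_conj, hz', map_zero]
        set r := p %ₘ K with hrdef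
        set q := p /ₘ K with hqdef
        have hsplit : r + K * q = p := modByMonic_add_div p K
        have hrz : aeval z r = 0 := by
          have : aeval z r + aeval z K * aeval z q = aeval z p := by
            rw [← map_mul, ← map_add]; exact congrArg _ hsplit
          rw [hKz, hz', zero_mul, add_zero] at this
          exact this
        have hrzbar : aeval (starRingEnd ℂ z) r = 0 := by
          have : aeval (starRingEnd ℂ z) r + aeval (starRingEnd ℂ z) K *
              aeval (starRingEnd ℂ z) q = aeval (starRingEnd ℂ z) p := by
            rw [← map_mul, ← map_add]; exact congrArg _ hsplit
          rw [hKzbar, hpzbar, zero_mul, add_zero] at this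
          exact this
        have hKdeg : K.degree = 2 := by
          have h1 : K.natDegree = 2 := by rw [hKdef]; exact natDegree_quad b c
          rw [degree_eq_natDegree hKm.ne_zero, h1]; rfl
        have hrd : r.degree < 2 := by
          have := degree_modByMonic_lt p hKm
          rwa [hKdeg] at this
        have hrd1 : r.degree ≤ 1 := by
          rcases hdeg : r.degree with _ | n
          · exact bot_le
          · rw [hdeg] at hrd
            have hn : (n : WithBot ℕ) < 2 := hrd
            have hn2 : n < 2 := by exact_mod_cast hn
            have : n ≤ 1 := by omega
            exact le_trans (WithBot.coe_le_coe.mpr this) (by norm_num)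
        have hrX : r = C (r.coeff 1) * X + C (r.coeff 0) :=
          eq_X_add_C_of_degree_le_one hrd1
        have him' : (r.coeff 1) * z.im = 0 := by
          have := hrz
          rw [hrX] at this
          simp only [map_add, map_mul, aeval_X, aeval_C] at this
          have h2 := congrArg Complex.im this
          simpa [Complex.mul_im] using h2
        have hr1 : r.coeff 1 = 0 := by
          rcases mul_eq_zero.mp him' with h | h
          · exact h
          · exact absurd h him
        have hr0 : r.coeff 0 = 0 := by
          have := hrz
          rw [hrX, hr1] at this
          simp only [map_add, map_mul, aeval_X, aeval_C, map_zero, zero_mul, zero_add] at this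
          have h3 : ((r.coeff 0 : ℝ) : ℂ) = 0 := by rw [← Complex.coe_algebraMap]; exact this
          exact_mod_cast h3
        have hr : r = 0 := by rw [hrX, hr1, hr0]; simp
        have hfac : p = K * q := by rw [← hsplit, hr, zero_add]
        have hqm : q.Monic := hKm.of_mul_monic_left (hfac ▸ hm)
        have hdq : q.natDegree ≤ N := by
          have := natDegree_quad_mul b c q hqm
          rw [← hKdef, ← hfac] at this
          omega
        have hqroot : ∀ w : ℂ, aeval w q = 0 → w.re < 0 := by
          intro w hw
          apply hroot
          rw [hfac, map_mul, hw, mul_zero]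
        rw [hfac, hKdef]
        have hb : 0 < b := by rw [hbdef]; linarith
        have hc : 0 < c := by
          rw [hcdef]
          have : z.im ^ 2 > 0 := by positivity
          positivity
        exact Phi_quad hb hc (ih q hdq hqm hqroot)

theorem unstable_alpha4_one (n : ℕ) (hn : 5 ≤ n) (α : ℕ → ℝ)
    (hα4 : α 4 = 1)
    (hconv : ∀ k, n < k → α k = 0)
    (hα2 : 0 < α 2) (hα2' : α 2 ≤ 2)
    (h7 : 0 ≤ α 7 - α 1 * α 6) :
    ∃ z : ℂ, aeval z (X ^ n + ∑ i ∈ Finset.range n, C (α (i + 1)) * X ^ (n - 1 - i)) = 0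
      ∧ 0 ≤ z.re := by
  by_contra hcon
  push_neg at hcon
  set p : ℝ[X] := X ^ n + ∑ i ∈ Finset.range n, C (α (i + 1)) * X ^ (n - 1 - i) with hpdef
  have hroot : ∀ z : ℂ, aeval z p = 0 → z.re < 0 := hcon
  have hsumdeg : (∑ i ∈ Finset.range n, C (α (i + 1)) * X ^ (n - 1 - i) : ℝ[X]).degree
      < (X ^ n : ℝ[X]).degree := by
    rw [degree_X_pow]
    apply lt_of_le_of_lt (degree_sum_le _ _)
    rw [Finset.sup_lt_iff (by exact_mod_cast WithBot.bot_lt_coe n)]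
    intro i hi
    apply lt_of_le_of_lt (degree_C_mul_X_pow_le _ _)
    exact_mod_cast (by simp at hi; omega : n - 1 - i < n)
  have hm : p.Monic := (monic_X_pow n).add_of_left hsumdeg
  have hdeg : p.natDegree = n := by
    have : p.degree = n := by
      rw [hpdef, degree_add_eq_left_of_degree_lt hsumdeg, degree_X_pow]
    exact natDegree_eq_of_degree_eq_some this
  have hcoeff : ∀ k, 1 ≤ k → k ≤ n → Acoef p k = α k := by
    intro k hk1 hkn
    rw [Acoef_of_le p (by rw [hdeg]; exact hkn)]
    rw [hdeg, hpdef, coeff_add, coeff_X_pow, if_neg (by omega : ¬ n - k = n),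
      finset_sum_coeff]
    rw [Finset.sum_eq_single (k - 1)]
    · rw [coeff_C_mul, coeff_X_pow, if_pos (by omega : n - k = n - 1 - (k - 1))]
      have : k - 1 + 1 = k := by omega
      rw [this]; ring
    · intro i hi hne
      rw [coeff_C_mul, coeff_X_pow,
        if_neg (by simp only [Finset.mem_range] at hi; omega : ¬ n - k = n - 1 - i)]
      ring
    · intro hnotin
      exact absurd (Finset.mem_range.mpr (by omega)) hnotin
  have hphi : Phi p := hurwitz_phi p.natDegree p le_rfl hm hroot
  rcases lt_or_ge n 7 with h7' | h7'
  · rcases (by omega : n = 5 ∨ n = 6) with rfl | rfl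
    · have h5 := hphi.C5 (by omega)
      rw [hcoeff 4 (by omega) (by omega), hcoeff 2 (by omega) (by omega), hα4] at h5
      nlinarith
    · have hα7 : α 7 = 0 := hconv 7 (by omega)
      have h1 : 0 < Acoef p 1 := hphi.pos 1 (by omega) (by omega)
      have h6 : 0 < Acoef p 6 := hphi.pos 6 (by omega) (by omega)
      rw [hcoeff 1 (by omega) (by omega)] at h1
      rw [hcoeff 6 (by omega) (by omega)] at h6
      nlinarith
  · have hJ3 := hphi.J3 (by omega)
    rw [hcoeff 7 (by omega) (by omega), hcoeff 1 (by omega) (by omega),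
      hcoeff 6 (by omega) (by omega)] at hJ3
    linarith
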